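/- If the vector g lies in the common nullspace of all matrices Z_0 + Z_1 + ... + Z_{k_0} and Z_∞, and k_0 ≥ 1, then the eigenvalue 1 of the companion matrix Q has a Jordan block of size at least 2; equivalently, the geometric multiplicity of the eigenvalue 1 is strictly less than its algebraic multiplicity (for g ≠ 0). -/

import Mathlib

open Matrix

/-- Block companion matrix: first block row `(Qk 0, ..., Qk (k0-1), Qinf)`,
identity blocks on the subdiagonal, and last block row `(0, ..., 0, I, I)`. -/
def companion (n k0 : ℕ) (Qk : Fin k0 → Matrix (Fin n) (Fin n) ℂ)
    (Qinf : Matrix (Fin n) (Fin n) ℂ) :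
    Matrix (Fin (k0 + 1) × Fin n) (Fin (k0 + 1) × Fin n) ℂ :=
  fun p q =>
    if p.1.val = 0 then
      if h : q.1.val < k0 then Qk ⟨q.1.val, h⟩ p.2 q.2 else Qinf p.2 q.2
    else
      (if q.1.val + 1 = p.1.val then (1 : Matrix (Fin n) (Fin n) ℂ) p.2 q.2 else 0)
        + (if p.1.val = k0 ∧ q.1.val = k0 then (1 : Matrix (Fin n) (Fin n) ℂ) p.2 q.2 else 0)

open Polynomial in
lemma aux_charpoly_sub_smul_one {m : Type*} [Fintype m] [DecidableEq m]
    (A : Matrix m m ℂ) (μ : ℂ) :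
    (A - μ • 1).charpoly = A.charpoly.comp (X + C μ) := by
  have h2 : (A - μ • 1).charmatrix.det
      = ((aeval (X + C μ : ℂ[X])).toRingHom (A.charmatrix.det)) := by
    rw [RingHom.map_det]
    congr 1
    ext i j
    simp only [RingHom.mapMatrix_apply, Matrix.map_apply, charmatrix_apply,
      AlgHom.toRingHom_eq_coe, RingHom.coe_coe, map_sub, aeval_C, diagonal_apply]
    by_cases h : i = j
    · simp [h, map_sub, aeval_X]; ring
    · simp [h]
  show (A - μ • 1).charmatrix.det = _
  rw [h2]
  show Polynomial.eval₂ Polynomial.C (X + C μ) (A.charmatrix.det) = _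
  rfl

lemma aux_sum_mulVec {ι : Type*} (s : Finset ι) {m n' : ℕ}
    (M : ι → Matrix (Fin m) (Fin n') ℂ) (v : Fin n' → ℂ) :
    (∑ i ∈ s, M i) *ᵥ v = ∑ i ∈ s, M i *ᵥ v := by
  classical
  induction s using Finset.cons_induction with
  | empty => simp [Matrix.zero_mulVec]
  | cons a s ha ih => rw [Finset.sum_cons, Finset.sum_cons, Matrix.add_mulVec, ih]

lemma aux_companion_mulVec_apply {n k0 : ℕ} (Qk : Fin k0 → Matrix (Fin n) (Fin n) ℂ)
    (Qinf : Matrix (Fin n) (Fin n) ℂ) (v : Fin (k0 + 1) × Fin n → ℂ)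
    (p : Fin (k0 + 1) × Fin n) :
    (companion n k0 Qk Qinf *ᵥ v) p =
      if p.1.val = 0 then
        (∑ j : Fin k0, (Qk j *ᵥ fun x => v (j.castSucc, x)) p.2)
          + (Qinf *ᵥ fun x => v (Fin.last k0, x)) p.2
      else
        (∑ q1 : Fin (k0 + 1), if q1.val + 1 = p.1.val then v (q1, p.2) else 0)
          + (∑ q1 : Fin (k0 + 1), if p.1.val = k0 ∧ q1.val = k0 then v (q1, p.2) else 0) := by
  have hmv : (companion n k0 Qk Qinf *ᵥ v) p
      = ∑ q1 : Fin (k0 + 1), ∑ q2 : Fin n, companion n k0 Qk Qinf p (q1, q2) * v (q1, q2) := by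
    simp [Matrix.mulVec, dotProduct, Fintype.sum_prod_type]
  rw [hmv]
  by_cases hp : p.1.val = 0
  · simp only [companion, hp, if_true]
    rw [Fin.sum_univ_castSucc]
    simp [Matrix.mulVec, dotProduct, Fin.eta]
  · simp only [companion, hp, if_false]
    simp only [add_mul, Finset.sum_add_distrib]
    congr 1
    · apply Finset.sum_congr rfl
      intro q1 _
      by_cases hc : q1.val + 1 = p.1.val <;>
        simp [hc, Matrix.one_apply, ite_mul, zero_mul, Finset.sum_ite_eq]
    · apply Finset.sum_congr rfl
      intro q1 _
      by_cases hc : p.1.val = k0 ∧ q1.val = k0 <;>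
        simp [hc, Matrix.one_apply, ite_mul, zero_mul, Finset.sum_ite_eq]

/-- If `g ≠ 0` lies in the common nullspace of `Z0 + Z1 + ... + Z_{k0}` and `Zinf`, and
`k0 ≥ 1`, then the eigenvalue `1` of the companion matrix `Q` has a Jordan block of size at
least `2`: the geometric multiplicity of the eigenvalue `1` is strictly smaller than its
algebraic multiplicity. -/
theorem stmt3 (n k0 : ℕ) (hk0 : 1 ≤ k0) (Z : ℕ → Matrix (Fin n) (Fin n) ℂ)
    (Zinf : Matrix (Fin n) (Fin n) ℂ) (hZ0 : IsUnit (Z 0).det)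
    (g : Fin n → ℂ) (hg : g ≠ 0)
    (hsum : (∑ k ∈ Finset.range (k0 + 1), Z k) *ᵥ g = 0)
    (hker : Zinf *ᵥ g = 0) :
    Module.finrank ℂ
        (Module.End.eigenspace
          (Matrix.toLin' (companion n k0 (fun j => -((Z 0)⁻¹ * Z (j.val + 1)))
            (-((Z 0)⁻¹ * Zinf)))) 1)
      < Polynomial.rootMultiplicity (1 : ℂ)
          (Matrix.charpoly (companion n k0 (fun j => -((Z 0)⁻¹ * Z (j.val + 1)))
            (-((Z 0)⁻¹ * Zinf)))) := by
  set Qk : Fin k0 → Matrix (Fin n) (Fin n) ℂ := fun j => -((Z 0)⁻¹ * Z (j.val + 1)) with hQk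
  set Qinf : Matrix (Fin n) (Fin n) ℂ := -((Z 0)⁻¹ * Zinf) with hQinf
  set Q : Matrix (Fin (k0 + 1) × Fin n) (Fin (k0 + 1) × Fin n) ℂ := companion n k0 Qk Qinf with hQ
  set f := Matrix.toLin' Q with hf
  set u : Fin (k0 + 1) × Fin n → ℂ := fun p => g p.2 with hu
  set e : Fin (k0 + 1) × Fin n → ℂ := fun p => if p.1.val = k0 then g p.2 else 0 with he
  have hZinfg : Qinf *ᵥ g = 0 := by
    rw [hQinf, Matrix.neg_mulVec, ← Matrix.mulVec_mulVec, hker, Matrix.mulVec_zero, neg_zero]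
  -- sum identity for row 0
  have h2 : (∑ j : Fin k0, Z (j.val + 1) *ᵥ g) = -(Z 0 *ᵥ g) := by
    have h3 : (∑ j : Fin k0, Z (j.val + 1) *ᵥ g) = ∑ j ∈ Finset.range k0, Z (j + 1) *ᵥ g :=
      Fin.sum_univ_eq_sum_range (fun j => Z (j + 1) *ᵥ g) k0
    have h4 : (Z 0 *ᵥ g) + ∑ j ∈ Finset.range k0, Z (j + 1) *ᵥ g = 0 := by
      have h5 := hsum
      rw [Finset.sum_range_succ'] at h5
      rw [Matrix.add_mulVec, aux_sum_mulVec] at h5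
      rw [add_comm]
      exact h5
    rw [h3, eq_neg_iff_add_eq_zero, add_comm]
    exact h4
  have hrow0 : (∑ j : Fin k0, (Qk j *ᵥ g)) + Qinf *ᵥ g = g := by
    rw [hZinfg, add_zero]
    calc ∑ j : Fin k0, Qk j *ᵥ g
        = ∑ j : Fin k0, -((Z 0)⁻¹ *ᵥ (Z (j.val + 1) *ᵥ g)) := by
          refine Finset.sum_congr rfl fun j _ => ?_
          show -((Z 0)⁻¹ * Z (j.val + 1)) *ᵥ g = _
          rw [Matrix.neg_mulVec, ← Matrix.mulVec_mulVec]
      _ = -((Z 0)⁻¹ *ᵥ (∑ j : Fin k0, Z (j.val + 1) *ᵥ g)) := by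
          rw [Finset.sum_neg_distrib]
          congr 1
          simp_rw [← Matrix.mulVecLin_apply]
          rw [← map_sum]
      _ = -((Z 0)⁻¹ *ᵥ (-(Z 0 *ᵥ g))) := by rw [h2]
      _ = (Z 0)⁻¹ *ᵥ (Z 0 *ᵥ g) := by rw [Matrix.mulVec_neg, neg_neg]
      _ = g := by rw [Matrix.mulVec_mulVec, Matrix.nonsing_inv_mul _ hZ0, Matrix.one_mulVec]
  -- action of Q on u
  have hQu : Q *ᵥ u = u + e := by
    funext p
    rw [hQ, aux_companion_mulVec_apply]
    by_cases hp : p.1.val = 0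
    · simp only [hp, if_true]
      have he0 : e p = 0 := by rw [he]; exact if_neg (by omega)
      have hgoal : (∑ j : Fin k0, (Qk j *ᵥ g) p.2) + (Qinf *ᵥ g) p.2 = g p.2 := by
        have h6 := congrFun hrow0 p.2
        simpa using h6
      simp only [Pi.add_apply, he0, add_zero]
      exact hgoal
    · simp only [hp, if_false]
      have hple : p.1.val ≤ k0 := Nat.lt_succ_iff.mp p.1.isLt
      have hppos : 0 < p.1.val := Nat.pos_of_ne_zero hp
      have j0lt : p.1.val - 1 < k0 + 1 := by omega
      have hsum1 : (∑ q1 : Fin (k0 + 1), if q1.val + 1 = p.1.val then u (q1, p.2) else 0)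
          = g p.2 := by
        rw [Finset.sum_eq_single (⟨p.1.val - 1, j0lt⟩ : Fin (k0 + 1))]
        · rw [if_pos]; show p.1.val - 1 + 1 = p.1.val; omega
        · intro b _ hb
          rw [if_neg]
          intro hcb
          exact hb (Fin.ext (show b.val = p.1.val - 1 by omega))
        · intro h; exact absurd (Finset.mem_univ _) h
      have hsum2 : (∑ q1 : Fin (k0 + 1), if p.1.val = k0 ∧ q1.val = k0 then u (q1, p.2) else 0)
          = if p.1.val = k0 then g p.2 else 0 := by
        by_cases hpk : p.1.val = k0
        · rw [if_pos hpk, Finset.sum_eq_single (Fin.last k0)]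
          · rw [if_pos ⟨hpk, Fin.val_last k0⟩]
          · intro b _ hb
            rw [if_neg]
            rintro ⟨-, hbk⟩
            exact hb (Fin.ext (by simp [hbk]))
          · intro h; exact absurd (Finset.mem_univ _) h
        · rw [if_neg hpk]
          apply Finset.sum_eq_zero
          intro b _
          rw [if_neg]
          rintro ⟨hc, -⟩
          exact hpk hc
      rw [hsum1, hsum2]
      rfl
  -- action of Q on e
  have hQe : Q *ᵥ e = e := by
    funext p
    rw [hQ, aux_companion_mulVec_apply]
    by_cases hp : p.1.val = 0
    · simp only [hp, if_true]
      have he0 : e p = 0 := by rw [he]; exact if_neg (by omega)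
      have hlast : (fun x => e (Fin.last k0, x)) = g := by
        funext x; simp [he]
      have h1 : ∀ j : Fin k0, (fun x => e (j.castSucc, x)) = (0 : Fin n → ℂ) := by
        intro j; funext x
        show (if (j.castSucc : Fin (k0 + 1)).val = k0 then g x else 0) = 0
        rw [if_neg]
        rw [Fin.coe_castSucc]
        exact Nat.ne_of_lt j.isLt
      have hz : ∀ j : Fin k0, (Qk j *ᵥ fun x => e (j.castSucc, x)) p.2 = 0 := by
        intro j; rw [h1 j, Matrix.mulVec_zero]; rfl
      rw [he0, hlast, hZinfg]
      rw [Finset.sum_congr rfl fun j _ => hz j]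
      simp
    · simp only [hp, if_false]
      have hple : p.1.val ≤ k0 := Nat.lt_succ_iff.mp p.1.isLt
      have hsum1 : (∑ q1 : Fin (k0 + 1), if q1.val + 1 = p.1.val then e (q1, p.2) else 0)
          = 0 := by
        apply Finset.sum_eq_zero
        intro b _
        by_cases hb : b.val + 1 = p.1.val
        · rw [if_pos hb]
          show (if b.1 = k0 then g p.2 else 0) = 0
          rw [if_neg]
          omega
        · rw [if_neg hb]
      have hsum2 : (∑ q1 : Fin (k0 + 1), if p.1.val = k0 ∧ q1.val = k0 then e (q1, p.2) else 0)
          = if p.1.val = k0 then g p.2 else 0 := by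
        by_cases hpk : p.1.val = k0
        · rw [if_pos hpk, Finset.sum_eq_single (Fin.last k0)]
          · rw [if_pos ⟨hpk, Fin.val_last k0⟩]
            simp [he]
          · intro b _ hb
            rw [if_neg]
            rintro ⟨-, hbk⟩
            exact hb (Fin.ext (by simp [hbk]))
          · intro h; exact absurd (Finset.mem_univ _) h
        · rw [if_neg hpk]
          apply Finset.sum_eq_zero
          intro b _
          rw [if_neg]
          rintro ⟨hc, -⟩
          exact hpk hc
      rw [hsum1, hsum2, zero_add]
  have hene : e ≠ 0 := by
    intro hcon
    apply hg
    funext x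
    have h7 := congrFun hcon (⟨k0, Nat.lt_succ_self k0⟩, x)
    simpa [he] using h7
  -- the shifted endomorphism
  set φ : Module.End ℂ (Fin (k0 + 1) × Fin n → ℂ) := Matrix.toLin' (Q - (1 : ℂ) • 1) with hφ
  have hφapp : ∀ v, φ v = Q *ᵥ v - v := by
    intro v
    rw [hφ, Matrix.toLin'_apply, Matrix.sub_mulVec, Matrix.smul_mulVec,
      Matrix.one_mulVec, one_smul]
  have hfapp : ∀ v, f v = Q *ᵥ v := fun v => Matrix.toLin'_apply Q v
  have hφu : φ u = e := by rw [hφapp, hQu, add_sub_cancel_left]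
  have hφe : φ e = 0 := by rw [hφapp, hQe, sub_self]
  -- the strict inclusion of eigenspace into max generalized eigenspace
  have hlt : Module.End.eigenspace f 1 < φ.maxGenEigenspace 0 := by
    rw [SetLike.lt_iff_le_and_exists]
    constructor
    · intro x hx
      rw [Module.End.mem_eigenspace_iff, one_smul] at hx
      rw [Module.End.mem_maxGenEigenspace]
      refine ⟨1, ?_⟩
      simp only [zero_smul, sub_zero, pow_one]
      rw [hφapp, ← hfapp, hx, sub_self]
    · refine ⟨u, ?_, ?_⟩
      · rw [Module.End.mem_maxGenEigenspace]
        refine ⟨2, ?_⟩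
        simp only [zero_smul, sub_zero, pow_two, Module.End.mul_apply]
        rw [hφu, hφe]
      · rw [Module.End.mem_eigenspace_iff, one_smul]
        intro hcon
        rw [hfapp, hQu] at hcon
        apply hene
        have h8 := congrArg (fun w => w - u) hcon
        simpa using h8
  have hfin : Module.finrank ℂ (Module.End.eigenspace f 1)
      < Module.finrank ℂ (φ.maxGenEigenspace 0) :=
    Submodule.finrank_lt_finrank_of_lt hlt
  have hchar : φ.charpoly = (Q - (1 : ℂ) • 1).charpoly := by
    rw [hφ, ← LinearMap.charpoly_toMatrix (Matrix.toLin' (Q - (1 : ℂ) • 1))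
      (Pi.basisFun ℂ (Fin (k0 + 1) × Fin n)), LinearMap.toMatrix_eq_toMatrix',
      LinearMap.toMatrix'_toLin']
  have hdim : Module.finrank ℂ (φ.maxGenEigenspace 0)
      = Polynomial.rootMultiplicity (1 : ℂ) Q.charpoly := by
    rw [LinearMap.finrank_maxGenEigenspace_zero_eq, hchar, aux_charpoly_sub_smul_one,
      Polynomial.rootMultiplicity_eq_natTrailingDegree]
  rw [← hdim]
  exact hfin
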